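/- Energy decay/uniqueness for an abstract homogeneous coupled evolution: Let H₁, H₂, H₃ be real inner product spaces and let u, q, p : [0,T] → H₁ × H₂ × H₃ (componentwise) be continuously differentiable with u(0) = 0, q(0) = 0, p(0) = 0. Suppose for all t: 2μ⟨E u(t), E v⟩ − ⟨q(t), B v⟩ = 0 for all v; λ⁻¹⟨q'(t) − p'(t), w⟩ + ⟨B u'(t), w⟩ = 0 for all w ∈ H₂; and −λ⁻¹⟨q'(t) − p'(t), r⟩ + κ⟨G p(t), G r⟩ = 0 for all r ∈ H₃, where E, B, G are bounded linear maps, μ, λ, κ > 0. Then for all t, E u(t) = 0, q(t) = p(t), and G p(t) = 0. -/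

import Mathlib

open scoped RealInnerProductSpace

theorem stmt8 {H₁ H₂ H₄ : Type*}
    [NormedAddCommGroup H₁] [InnerProductSpace ℝ H₁]
    [NormedAddCommGroup H₂] [InnerProductSpace ℝ H₂]
    [NormedAddCommGroup H₄] [InnerProductSpace ℝ H₄]
    (E : H₁ →L[ℝ] H₄) (B : H₁ →L[ℝ] H₂) (G : H₂ →L[ℝ] H₄)
    (μ lam κ T : ℝ) (hμ : 0 < μ) (hlam : 0 < lam) (hκ : 0 < κ) (hT : 0 < T)
    (u u' : ℝ → H₁) (q q' p p' : ℝ → H₂)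
    (hu : ∀ t, HasDerivAt u (u' t) t) (hu' : Continuous u')
    (hq : ∀ t, HasDerivAt q (q' t) t) (hq' : Continuous q')
    (hp : ∀ t, HasDerivAt p (p' t) t) (hp' : Continuous p')
    (hu0 : u 0 = 0) (hq0 : q 0 = 0) (hp0 : p 0 = 0)
    (heq1 : ∀ t ∈ Set.Icc 0 T, ∀ v : H₁,
      2 * μ * ⟪E (u t), E v⟫ - ⟪q t, B v⟫ = 0)
    (heq2 : ∀ t ∈ Set.Icc 0 T, ∀ w : H₂,
      lam⁻¹ * ⟪q' t - p' t, w⟫ + ⟪B (u' t), w⟫ = 0)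
    (heq3 : ∀ t ∈ Set.Icc 0 T, ∀ r : H₂,
      -(lam⁻¹ * ⟪q' t - p' t, r⟫) + κ * ⟪G (p t), G r⟫ = 0) :
    ∀ t ∈ Set.Icc 0 T, E (u t) = 0 ∧ q t = p t ∧ G (p t) = 0 := by
  set F : ℝ → ℝ := fun t => μ * ⟪E (u t), E (u t)⟫ + (lam⁻¹/2) * ⟪q t - p t, q t - p t⟫ with hFdef
  have hEu : ∀ t : ℝ, HasDerivAt (fun s => E (u s)) (E (u' t)) t := fun t =>
    (E.hasFDerivAt.comp_hasDerivAt t (hu t))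
  have hqp : ∀ t : ℝ, HasDerivAt (fun s => q s - p s) (q' t - p' t) t := fun t =>
    (hq t).sub (hp t)
  have hFderiv : ∀ t : ℝ, HasDerivAt F
      (μ * (⟪E (u t), E (u' t)⟫ + ⟪E (u' t), E (u t)⟫)
        + (lam⁻¹/2) * (⟪q t - p t, q' t - p' t⟫ + ⟪q' t - p' t, q t - p t⟫)) t := by
    intro t
    exact (((hEu t).inner ℝ (hEu t)).const_mul μ).add
      (((hqp t).inner ℝ (hqp t)).const_mul (lam⁻¹/2))
  have key : ∀ t ∈ Set.Icc (0:ℝ) T,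
      μ * (⟪E (u t), E (u' t)⟫ + ⟪E (u' t), E (u t)⟫)
        + (lam⁻¹/2) * (⟪q t - p t, q' t - p' t⟫ + ⟪q' t - p' t, q t - p t⟫)
      = -(κ * ⟪G (p t), G (p t)⟫) := by
    intro t ht
    have h1 := heq1 t ht (u' t)
    have h2 := heq2 t ht (q t - p t)
    have h3 := heq2 t ht (p t)
    have h4 := heq3 t ht (p t)
    have cA : ⟪E (u' t), E (u t)⟫ = ⟪E (u t), E (u' t)⟫ := real_inner_comm _ _
    have cC : ⟪q t - p t, q' t - p' t⟫ = ⟪q' t - p' t, q t - p t⟫ := real_inner_comm _ _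
    have cX : ⟪B (u' t), q t - p t⟫ = ⟪q t, B (u' t)⟫ - ⟪B (u' t), p t⟫ := by
      rw [inner_sub_right, real_inner_comm (B (u' t)) (q t)]
    linear_combination h1 + h2 + h3 + h4 + μ * cA + (lam⁻¹/2) * cC - cX
  have hFcont : Continuous F := by
    rw [continuous_iff_continuousAt]
    exact fun t => (hFderiv t).continuousAt
  have hF0 : F 0 = 0 := by
    simp [hFdef, hu0, hq0, hp0]
  have hFnonneg : ∀ t, 0 ≤ F t := fun t =>
    add_nonneg (mul_nonneg hμ.le real_inner_self_nonneg)
      (mul_nonneg (by positivity) real_inner_self_nonneg)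
  have hanti : AntitoneOn F (Set.Icc 0 T) := by
    apply antitoneOn_of_deriv_nonpos (convex_Icc 0 T) hFcont.continuousOn
    · exact fun x _ => (hFderiv x).differentiableAt.differentiableWithinAt
    · intro x hx
      rw [interior_Icc] at hx
      rw [(hFderiv x).deriv, key x (Set.mem_Icc_of_Ioo hx)]
      have := real_inner_self_nonneg (x := G (p x))
      nlinarith
  have hFzero : ∀ t ∈ Set.Icc (0:ℝ) T, F t = 0 := by
    intro t ht
    have h := hanti (Set.left_mem_Icc.2 hT.le) ht ht.1
    rw [hF0] at h
    linarith [hFnonneg t]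
  have hEuz : ∀ t ∈ Set.Icc (0:ℝ) T, E (u t) = 0 := by
    intro t ht
    have h := hFzero t ht
    have h1 : (0:ℝ) ≤ μ * ⟪E (u t), E (u t)⟫ := mul_nonneg hμ.le real_inner_self_nonneg
    have h2 : (0:ℝ) ≤ (lam⁻¹/2) * ⟪q t - p t, q t - p t⟫ :=
      mul_nonneg (by positivity) real_inner_self_nonneg
    have : ⟪E (u t), E (u t)⟫ = 0 := by
      have : μ * ⟪E (u t), E (u t)⟫ = 0 := by simp only [hFdef] at h; linarith
      have := mul_eq_zero.1 this
      rcases this with h | h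
      · exact absurd h hμ.ne'
      · exact h
    exact inner_self_eq_zero.1 this
  have hqpz : ∀ t ∈ Set.Icc (0:ℝ) T, q t = p t := by
    intro t ht
    have h := hFzero t ht
    have h1 : (0:ℝ) ≤ μ * ⟪E (u t), E (u t)⟫ := mul_nonneg hμ.le real_inner_self_nonneg
    have : ⟪q t - p t, q t - p t⟫ = 0 := by
      have h2 : (lam⁻¹/2) * ⟪q t - p t, q t - p t⟫ = 0 := by
        have h3 := mul_nonneg (show (0:ℝ) ≤ lam⁻¹/2 by positivity)
          (real_inner_self_nonneg (x := q t - p t))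
        simp only [hFdef] at h
        linarith
      rcases mul_eq_zero.1 h2 with h | h
      · exact absurd h (by positivity)
      · exact h
    have := inner_self_eq_zero.1 this
    exact sub_eq_zero.1 this
  have hGpIoo : ∀ t ∈ Set.Ioo (0:ℝ) T, G (p t) = 0 := by
    intro t ht
    have hmem : Set.Icc (0:ℝ) T ∈ nhds t := Icc_mem_nhds ht.1 ht.2
    have hev : (fun s => q s - p s) =ᶠ[nhds t] (fun _ => (0:H₂)) := by
      filter_upwards [hmem] with s hs
      rw [hqpz s hs, sub_self]
    have hzero : HasDerivAt (fun s => q s - p s) 0 t :=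
      (hasDerivAt_const t (0:H₂)).congr_of_eventuallyEq hev
    have hder : q' t - p' t = 0 := (hqp t).unique hzero
    have h4 := heq3 t (Set.mem_Icc_of_Ioo ht) (p t)
    rw [hder] at h4
    simp at h4
    rcases h4 with h | h
    · exact absurd h hκ.ne'
    · exact h
  have hGpcont : Continuous (fun t => G (p t)) := by
    exact G.continuous.comp (continuous_iff_continuousAt.2 fun t => (hp t).continuousAt)
  have hGall : Set.EqOn (fun t => G (p t)) (fun _ => (0:H₄)) (Set.Icc 0 T) := by
    have heqon : Set.EqOn (fun t => G (p t)) (fun _ => (0:H₄)) (Set.Ioo 0 T) := hGpIoo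
    have := heqon.closure hGpcont continuous_const
    rwa [closure_Ioo hT.ne] at this
  intro t ht
  exact ⟨hEuz t ht, hqpz t ht, hGall ht⟩
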